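/- Let a, r1, r2, r3 be real numbers with a > 0 and r1 < r2 < r3, and let Q : ℝ → ℝ be a differentiable function whose derivative is Q'(x) = 4a(x − r1)(x − r2)(x − r3) for all x. If 2r2 − r1 − r3 = 0, then both r1 and r3 are global minimizers of Q, i.e., Q(r1) = Q(r3) ≤ Q(x) for all x ∈ ℝ. -/

import Mathlib

/-- If `2r₂ − r₁ − r₃ = 0`, then both `r₁` and `r₃` are global
minimizers of `Q`. -/
theorem stmt_1 (a r₁ r₂ r₃ : ℝ) (ha : 0 < a) (h₁₂ : r₁ < r₂) (h₂₃ : r₂ < r₃)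
    (Q : ℝ → ℝ) (hQ : Differentiable ℝ Q)
    (hQ' : ∀ x : ℝ, deriv Q x = 4 * a * (x - r₁) * (x - r₂) * (x - r₃))
    (h : 2 * r₂ - r₁ - r₃ = 0) :
    Q r₁ = Q r₃ ∧ ∀ x : ℝ, Q r₁ ≤ Q x := by
  set g : ℝ → ℝ := fun x => a * ((x - r₁) * (x - r₃)) ^ 2 with hg
  have hgd : ∀ x : ℝ, HasDerivAt g (4 * a * (x - r₁) * (x - r₂) * (x - r₃)) x := by
    intro x
    have h1 : HasDerivAt (fun x : ℝ => (x - r₁) * (x - r₃)) ((x - r₃) + (x - r₁)) x := by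
      have := ((hasDerivAt_id x).sub_const r₁).mul ((hasDerivAt_id x).sub_const r₃)
      exact this.congr_deriv (by simp only [id, one_mul, mul_one])
    have h2 := (h1.pow 2).const_mul a
    refine h2.congr_deriv ?_
    have hr : r₂ = (r₁ + r₃) / 2 := by linarith
    subst hr; ring
  have hF : ∀ x : ℝ, HasDerivAt (fun x => Q x - g x) 0 x := by
    intro x
    have := (hQ x).hasDerivAt.sub (hgd x)
    rw [hQ' x] at this
    exact this.congr_deriv (sub_self _)
  have hconst : ∀ x : ℝ, Q x - g x = Q r₁ - g r₁ := by
    intro x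
    exact is_const_of_deriv_eq_zero
      (fun y => ((hQ y).hasDerivAt.sub (hgd y)).differentiableAt)
      (fun y => (hF y).deriv) x r₁
  have hg1 : g r₁ = 0 := by simp [hg]
  have hg3 : g r₃ = 0 := by simp [hg]
  constructor
  · have := hconst r₃
    rw [hg1, hg3] at this; linarith
  · intro x
    have := hconst x
    have hgnn : 0 ≤ g x := by positivity
    rw [hg1] at this; linarith
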